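/- Let η > 0, suppose the initialization satisfies w1^(0) > 0, w2^(0) < 0, −1 < −b1^(0)/w1^(0) < −b2^(0)/w2^(0) < 1, and v1^(0) + u2^(0) ≠ 0, and let (w1^(t), b1^(t), w2^(t), b2^(t)) follow the specialized update rules. Define the decision threshold x*(t) = (b2^(t) − b1^(t))/(w1^(t) − w2^(t)). Then |x*(t)| = Θ(1/ln(t)): there exist constants c, C > 0 and T ∈ ℕ such that for all t ≥ T, c/ln(t) ≤ |x*(t)| ≤ C/ln(t). -/

import Mathlib

open Real Filter

lemma seq_lower (η : ℝ) (hη : 0 < η) (x : ℕ → ℝ)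
    (hx : ∀ t, x (t+1) = x t + η * Real.exp (-(x t))) :
    ∀ t : ℕ, Real.exp (x 0) + η * t ≤ Real.exp (x t) := by
  intro t
  induction t with
  | zero => simp
  | succ n ih =>
    have key : Real.exp (x n) + η ≤ Real.exp (x (n+1)) := by
      rw [hx n, Real.exp_add]
      have h1 : 1 + η * Real.exp (-(x n)) ≤ Real.exp (η * Real.exp (-(x n))) := by
        have := Real.add_one_le_exp (η * Real.exp (-(x n))); linarith
      have h2 : Real.exp (x n) * (1 + η * Real.exp (-(x n))) = Real.exp (x n) + η := by
        rw [Real.exp_neg]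
        field_simp
      calc Real.exp (x n) + η = Real.exp (x n) * (1 + η * Real.exp (-(x n))) := h2.symm
        _ ≤ Real.exp (x n) * Real.exp (η * Real.exp (-(x n))) := by
            exact mul_le_mul_of_nonneg_left h1 (Real.exp_pos _).le
    push_cast
    linarith

lemma seq_upper (η : ℝ) (hη : 0 < η) (x : ℕ → ℝ)
    (hx : ∀ t, x (t+1) = x t + η * Real.exp (-(x t))) :
    ∀ t : ℕ, 2 ≤ t → Real.exp (x t) ≤ η * t + Real.exp (x 2) + 4*η*Real.log t := by
  intro t ht
  induction t, ht using Nat.le_induction with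
  | base =>
      have h2 : (0:ℝ) < Real.log 2 := Real.log_pos (by norm_num)
      push_cast
      nlinarith
  | succ n hn ih =>
      have hElow : η * n + Real.exp (x 0) ≤ Real.exp (x n) := by
        have := seq_lower η hη x hx n; linarith
      have hn1 : (2:ℝ) ≤ n := by exact_mod_cast hn
      have hE : η * n < Real.exp (x n) := by
        have := Real.exp_pos (x 0); linarith
      set E := Real.exp (x n) with hEdef
      have hEpos : 0 < E := Real.exp_pos _
      have hEη : η < E := by nlinarith
      -- exp(x (n+1)) = E * exp (η / E)
      have hstep : Real.exp (x (n+1)) = E * Real.exp (η * E⁻¹) := by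
        rw [hx n, Real.exp_add, Real.exp_neg]
      -- exp(η/E) ≤ 1/(1 - η/E)
      have hy : 0 < 1 - η * E⁻¹ := by
        rw [sub_pos]
        rw [mul_inv_lt_iff₀ hEpos]  -- maybe wrong name
        linarith
      have hexp_le : Real.exp (η * E⁻¹) ≤ (1 - η * E⁻¹)⁻¹ := by
        have h1 : 1 - η * E⁻¹ ≤ Real.exp (-(η * E⁻¹)) := by
          have := Real.add_one_le_exp (-(η * E⁻¹)); linarith
        rw [Real.exp_neg] at h1
        calc Real.exp (η * E⁻¹) = ((Real.exp (η * E⁻¹))⁻¹)⁻¹ := by rw [inv_inv]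
          _ ≤ (1 - η * E⁻¹)⁻¹ := by
              apply inv_anti₀ hy h1
      have hEn1 : Real.exp (x (n+1)) ≤ E + η + η^2/(E - η) := by
        rw [hstep]
        have hne : E - η ≠ 0 := ne_of_gt (by linarith)
        have : E * (1 - η * E⁻¹)⁻¹ = E + η + η^2/(E - η) := by
          field_simp
          ring
        calc E * Real.exp (η * E⁻¹) ≤ E * (1 - η * E⁻¹)⁻¹ :=
              mul_le_mul_of_nonneg_left hexp_le hEpos.le
          _ = E + η + η^2/(E - η) := this
      have hrem : η^2/(E - η) ≤ 2*η/n := by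
        have h1 : η * n / 2 ≤ E - η := by nlinarith
        have h2 : 0 < η * n / 2 := by positivity
        calc η^2/(E-η) ≤ η^2/(η*n/2) := by
              apply div_le_div_of_nonneg_left (by positivity) h2 h1
          _ = 2*η/n := by field_simp
      have hlog : Real.log n + 1/(n+1) ≤ Real.log (n+1) := by
        have hpos : (0:ℝ) < (n:ℝ)/(n+1) := by positivity
        have := Real.log_le_sub_one_of_pos hpos
        rw [Real.log_div (by positivity) (by positivity)] at this
        have h1 : (n:ℝ)/(n+1) - 1 = -(1/(n+1)) := by field_simp; ring
        linarith
      have h4 : 2*η/n ≤ 4*η/(n+1) := by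
        rw [div_le_div_iff₀ (by linarith) (by linarith)]
        nlinarith
      have h6 : 4*η*Real.log ↑n + 4*η*(1/((n:ℝ)+1)) ≤ 4*η*Real.log ((n:ℝ)+1) := by
        nlinarith [hlog]
      have h7 : 2*η/(n:ℝ) ≤ 4*η*(1/((n:ℝ)+1)) := by rw [mul_one_div]; exact h4
      push_cast
      linarith [hEn1, hrem, ih, h6, h7]

open Real Filter

/-- under the specialized update rules with ordered breakpoints
and `v1⁰ + u2⁰ ≠ 0`, the decision threshold
`x*(t) = (b2 - b1)/(w1 - w2)` satisfies `|x*(t)| = Θ(1/ln t)`. -/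
theorem stmt_8 (η : ℝ) (hη : 0 < η) (w1 b1 w2 b2 : ℕ → ℝ)
    (h1 : ∀ t : ℕ, w1 (t+1) = w1 t + η/2 * Real.exp (-(w1 t) - b1 t))
    (h2 : ∀ t : ℕ, b1 (t+1) = b1 t + η/2 * Real.exp (-(w1 t) - b1 t))
    (h3 : ∀ t : ℕ, w2 (t+1) = w2 t - η/2 * Real.exp (w2 t - b2 t))
    (h4 : ∀ t : ℕ, b2 (t+1) = b2 t + η/2 * Real.exp (w2 t - b2 t))
    (hw1 : 0 < w1 0) (hw2 : w2 0 < 0)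
    (hβ1 : -1 < -(b1 0) / w1 0)
    (hβ12 : -(b1 0) / w1 0 < -(b2 0) / w2 0)
    (hβ2 : -(b2 0) / w2 0 < 1)
    (hvu : (w1 0 - b1 0) + (w2 0 + b2 0) ≠ 0) :
    ∃ c C : ℝ, 0 < c ∧ 0 < C ∧ ∃ T : ℕ, ∀ t : ℕ, T ≤ t →
      c / Real.log t ≤ |(b2 t - b1 t) / (w1 t - w2 t)| ∧
      |(b2 t - b1 t) / (w1 t - w2 t)| ≤ C / Real.log t := by
  set S : ℕ → ℝ := fun t => w1 t + b1 t with hSdef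
  set R : ℕ → ℝ := fun t => b2 t - w2 t with hRdef
  have hS : ∀ t, S (t+1) = S t + η * Real.exp (-(S t)) := by
    intro t
    simp only [hSdef]
    rw [h1 t, h2 t]
    have he : -(w1 t) - b1 t = -(w1 t + b1 t) := by ring
    rw [he]; ring
  have hR : ∀ t, R (t+1) = R t + η * Real.exp (-(R t)) := by
    intro t
    simp only [hRdef]
    rw [h3 t, h4 t]
    have he : w2 t - b2 t = -(b2 t - w2 t) := by ring
    rw [he]; ring
  have hv : ∀ t, w1 t - b1 t = w1 0 - b1 0 := by
    intro t; induction t with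
    | zero => rfl
    | succ n ih => rw [h1 n, h2 n]; linarith
  have hu : ∀ t, w2 t + b2 t = w2 0 + b2 0 := by
    intro t; induction t with
    | zero => rfl
    | succ n ih => rw [h3 n, h4 n]; linarith
  set K := (w1 0 - b1 0) + (w2 0 + b2 0) with hKdef
  set L := (w1 0 - b1 0) - (w2 0 + b2 0) with hLdef
  have hKpos : 0 < |K| := abs_pos.mpr hvu
  have hnum : ∀ t, b2 t - b1 t = (R t - S t + K)/2 := by
    intro t
    have ha := hv t; have hb := hu t
    simp only [hRdef, hSdef, hKdef]
    linarith
  have hden : ∀ t, w1 t - w2 t = (R t + S t + L)/2 := by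
    intro t
    have ha := hv t; have hb := hu t
    simp only [hRdef, hSdef, hLdef]
    linarith
  set A := max (Real.exp (S 2)) (Real.exp (R 2)) with hAdef
  have hApos : 0 < A := lt_of_lt_of_le (Real.exp_pos _) (le_max_left _ _)
  have hSlow : ∀ t : ℕ, η * t < Real.exp (S t) := by
    intro t
    have := seq_lower η hη S hS t
    have := Real.exp_pos (S 0)
    linarith
  have hRlow : ∀ t : ℕ, η * t < Real.exp (R t) := by
    intro t
    have := seq_lower η hη R hR t
    have := Real.exp_pos (R 0)
    linarith
  have hSup : ∀ t : ℕ, 2 ≤ t → Real.exp (S t) ≤ η*t + A + 4*η*Real.log t := by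
    intro t ht
    have := seq_upper η hη S hS t ht
    have h := le_max_left (Real.exp (S 2)) (Real.exp (R 2))
    linarith
  have hRup : ∀ t : ℕ, 2 ≤ t → Real.exp (R t) ≤ η*t + A + 4*η*Real.log t := by
    intro t ht
    have := seq_upper η hη R hR t ht
    have h := le_max_right (Real.exp (S 2)) (Real.exp (R 2))
    linarith
  -- eventual conditions
  have hlogTop : Tendsto (fun t : ℕ => Real.log t) atTop atTop :=
    Real.tendsto_log_atTop.comp tendsto_natCast_atTop_atTop
  have htend : Tendsto (fun t : ℕ => (A + 4*η*Real.log t)/(η*t)) atTop (nhds 0) := by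
    have hr : Tendsto (fun s : ℝ => (A/η) * s⁻¹ + 4*(Real.log s ^ 1 / (1*s + 0)))
        atTop (nhds ((A/η) * 0 + 4*0)) :=
      Tendsto.add (Tendsto.const_mul _ tendsto_inv_atTop_zero)
        (Tendsto.const_mul _ (Real.tendsto_pow_log_div_mul_add_atTop 1 0 1 one_ne_zero))
    have hr0 : Tendsto (fun s : ℝ => (A/η) * s⁻¹ + 4*(Real.log s ^ 1 / (1*s + 0)))
        atTop (nhds 0) := by simpa using hr
    have heq : (fun s : ℝ => (A + 4*η*Real.log s)/(η*s)) =ᶠ[atTop]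
        (fun s : ℝ => (A/η) * s⁻¹ + 4*(Real.log s ^ 1 / (1*s + 0))) := by
      filter_upwards [eventually_gt_atTop (0:ℝ)] with s hs
      have hs' : s ≠ 0 := ne_of_gt hs
      field_simp
      ring
    exact (hr0.congr' heq.symm).comp tendsto_natCast_atTop_atTop
  have hev : ∀ᶠ t : ℕ in atTop, 2 ≤ t ∧ 1 ≤ Real.log t ∧ -2*Real.log η ≤ Real.log t ∧
      4*|L| ≤ Real.log t ∧ (A + 4*η*Real.log t)/(η*t) ≤ |K|/2 ∧ 5*η + A ≤ (t:ℝ) := by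
    refine (eventually_ge_atTop 2).and ((hlogTop.eventually_ge_atTop 1).and
      ((hlogTop.eventually_ge_atTop _).and ((hlogTop.eventually_ge_atTop _).and
      ((htend.eventually_le_const (by positivity)).and
        (tendsto_natCast_atTop_atTop.eventually_ge_atTop _)))))
  obtain ⟨T, hT⟩ := eventually_atTop.mp hev
  refine ⟨|K|/10, 3*|K|, by positivity, by positivity, T, ?_⟩
  intro t htT
  obtain ⟨ht2, hlog1, hlogη, hlogL, hKcond, htA⟩ := hT t htT
  have htpos : (0:ℝ) < t := by exact_mod_cast Nat.lt_of_lt_of_le (by norm_num) ht2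
  have ht1 : (1:ℝ) ≤ t := by exact_mod_cast Nat.one_le_of_lt ht2
  have hlogpos : 0 < Real.log t := lt_of_lt_of_le one_pos hlog1
  have hlog_le_t : Real.log t ≤ (t:ℝ) := by
    have := Real.log_le_sub_one_of_pos htpos; linarith
  -- bounds on S t and R t
  have hlow : ∀ y : ℝ, η * t < Real.exp y → Real.log t / 2 ≤ y := by
    intro y hy
    have h0 : Real.log (η * t) ≤ y := by
      have := Real.log_le_log (by positivity) hy.le
      rwa [Real.log_exp] at this
    rw [Real.log_mul (ne_of_gt hη) (ne_of_gt htpos)] at h0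
    linarith
  have hup : ∀ y : ℝ, Real.exp y ≤ η*t + A + 4*η*Real.log t → y ≤ 2 * Real.log t := by
    intro y hy
    have hsq : η*t + A + 4*η*Real.log t ≤ (t:ℝ) * t := by nlinarith
    have h0 : y ≤ Real.log ((t:ℝ) * t) := by
      have := Real.log_le_log (Real.exp_pos y) (hy.trans hsq)
      rwa [Real.log_exp] at this
    rw [Real.log_mul (ne_of_gt htpos) (ne_of_gt htpos)] at h0
    linarith
  have hS1 : Real.log t / 2 ≤ S t := hlow _ (hSlow t)
  have hR1 : Real.log t / 2 ≤ R t := hlow _ (hRlow t)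
  have hS2 : S t ≤ 2 * Real.log t := hup _ (hSup t ht2)
  have hR2 : R t ≤ 2 * Real.log t := hup _ (hRup t ht2)
  -- bound on |R t - S t|
  set P := A + 4*η*Real.log t with hPdef
  have hPpos : 0 < P := by positivity
  have key : ∀ a b : ℝ, η*(t:ℝ) < Real.exp a → Real.exp b ≤ η*(t:ℝ) + P →
      b - a ≤ P/(η*t) := by
    intro a b ha hb
    have hexp : Real.exp (b - a) ≤ (η*t + P)/(η*t) := by
      rw [Real.exp_sub]
      exact div_le_div₀ (by positivity) hb (by positivity) ha.le
    have h0 := Real.add_one_le_exp (b - a)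
    have heq : (η*(t:ℝ)+P)/(η*t) = 1 + P/(η*t) := by field_simp
    rw [heq] at hexp
    linarith
  have hd : |R t - S t| ≤ |K|/2 := by
    have hab : R t - S t ≤ P/(η*t) := key _ _ (hSlow t) (by linarith [hRup t ht2])
    have hba : S t - R t ≤ P/(η*t) := key _ _ (hRlow t) (by linarith [hSup t ht2])
    have := abs_le.mpr ⟨by linarith, hab⟩
    calc |R t - S t| ≤ P/(η*t) := this
      _ ≤ |K|/2 := hKcond
  set N := R t - S t + K with hNdef
  set D := R t + S t + L with hDdef
  have hDlow : Real.log t / 2 ≤ D := by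
    have := neg_abs_le L
    simp only [hDdef]
    linarith
  have hDup : D ≤ 5 * Real.log t := by
    have := le_abs_self L
    simp only [hDdef]
    linarith
  have hDpos : 0 < D := lt_of_lt_of_le (by positivity) hDlow
  have hNlow : |K|/2 ≤ |N| := by
    have h0 := abs_add_le N (-(R t - S t))
    rw [abs_neg] at h0
    have he : N + -(R t - S t) = K := by simp only [hNdef]; ring
    rw [he] at h0
    linarith
  have hNup : |N| ≤ 3*|K|/2 := by
    have h0 := abs_add_le (R t - S t) K
    simp only [hNdef]
    linarith
  have hratio : (b2 t - b1 t) / (w1 t - w2 t) = N / D := by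
    rw [hnum t, hden t, div_div_div_comm]
    norm_num
    rfl
  have habs : |(b2 t - b1 t) / (w1 t - w2 t)| = |N| / D := by
    rw [hratio, abs_div, abs_of_pos hDpos]
  rw [habs]
  constructor
  · have h0 : (|K|/2)/(5 * Real.log t) ≤ |N| / D :=
      div_le_div₀ (abs_nonneg N) hNlow (by positivity) hDup
    have he : |K|/10 / Real.log t = (|K|/2)/(5 * Real.log t) := by
      rw [div_div, div_div]; ring_nf
    rw [he]; exact h0
  · have h0 : |N| / D ≤ (3*|K|/2)/(Real.log t / 2) :=
      div_le_div₀ (by positivity) hNup (by positivity) hDlow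
    have he : (3*|K|/2)/(Real.log t / 2) = 3*|K| / Real.log t := by
      rw [div_div_div_comm]; norm_num
    rw [← he] at *
    exact h0
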